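/- Let a : Fin m → {-1,1}, w₀ a probability vector, W⁻ = ∑_{aᵢ=-1} w₀(i) > 0, W⁺ = 1 - W⁻, and U(t) = 1/(W⁺ + e^{2t}·W⁻). Then the AdaBoost flow solution wₜ(i) = w₀(i)·e^{-t·aᵢ}/∑_p w₀(p)·e^{-t·a_p} satisfies wₜ = L[w₀] + D[w₀]·U(t) for all t ≥ 0, where L[w₀](i) = w₀(i)/W⁻ if aᵢ = -1 and 0 otherwise, and D[w₀](i) = w₀(i) if aᵢ = 1 and -(W⁺/W⁻)·w₀(i) if aᵢ = -1. Consequently wₜ → L[w₀] as t → +∞. -/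

import Mathlib

theorem stmt13 (m : ℕ) (a w0 : Fin m → ℝ)
    (ha : ∀ i, a i = 1 ∨ a i = -1)
    (hw0 : ∀ i, 0 ≤ w0 i) (hw0sum : ∑ i, w0 i = 1)
    (Wm Wp : ℝ)
    (hWm : Wm = ∑ i ∈ Finset.univ.filter (fun i => a i = -1), w0 i)
    (hWmpos : 0 < Wm) (hWp : Wp = 1 - Wm)
    (U : ℝ → ℝ) (hU : ∀ t, U t = 1 / (Wp + Real.exp (2 * t) * Wm))
    (w : ℝ → Fin m → ℝ)
    (hw : ∀ t i, w t i = w0 i * Real.exp (-t * a i) / ∑ q, w0 q * Real.exp (-t * a q))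
    (L D : Fin m → ℝ)
    (hL : ∀ i, L i = if a i = -1 then w0 i / Wm else 0)
    (hD : ∀ i, D i = if a i = -1 then -(Wp / Wm) * w0 i else w0 i) :
    (∀ t : ℝ, 0 ≤ t → ∀ i, w t i = L i + D i * U t) ∧
    (∀ i, Filter.Tendsto (fun t => w t i) Filter.atTop (nhds (L i))) := by
  have hWpeq : Wp = ∑ i ∈ Finset.univ.filter (fun i => ¬ a i = -1), w0 i := by
    have := Finset.sum_filter_add_sum_filter_not Finset.univ (fun i => a i = -1) w0
    rw [hWp, hWm]; linarith [hw0sum, this]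
  have hWppos : 0 ≤ Wp := by
    rw [hWpeq]; exact Finset.sum_nonneg fun i _ => hw0 i
  have hden : ∀ t : ℝ, (∑ q, w0 q * Real.exp (-t * a q))
      = Wp * Real.exp (-t) + Wm * Real.exp t := by
    intro t
    have hA : ∑ i ∈ Finset.univ.filter (fun i => a i = -1),
        w0 i * Real.exp (-t * a i) = Wm * Real.exp t := by
      rw [hWm, Finset.sum_mul]
      apply Finset.sum_congr rfl
      intro i hi
      simp only [Finset.mem_filter, Finset.mem_univ, true_and] at hi
      rw [hi]; norm_num
    have hB : ∑ i ∈ Finset.univ.filter (fun i => ¬ a i = -1),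
        w0 i * Real.exp (-t * a i) = Wp * Real.exp (-t) := by
      rw [hWpeq, Finset.sum_mul]
      apply Finset.sum_congr rfl
      intro i hi
      simp only [Finset.mem_filter, Finset.mem_univ, true_and] at hi
      rcases ha i with h | h
      · rw [h]; norm_num
      · exact absurd h hi
    rw [← Finset.sum_filter_add_sum_filter_not Finset.univ (fun i => a i = -1)
      (fun q => w0 q * Real.exp (-t * a q)), hA, hB]
    ring
  have hdenpos : ∀ t : ℝ, 0 < Wp * Real.exp (-t) + Wm * Real.exp t := by
    intro t
    have := Real.exp_pos t
    have := Real.exp_pos (-t)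
    nlinarith
  have hUden : ∀ t : ℝ, 0 < Wp + Real.exp t * Real.exp t * Wm := by
    intro t
    have h1 := Real.exp_pos t
    nlinarith [mul_pos (mul_pos h1 h1) hWmpos]
  have h2t : ∀ t : ℝ, Real.exp (2 * t) = Real.exp t * Real.exp t := by
    intro t; rw [← Real.exp_add]; ring_nf
  have key : ∀ t : ℝ, ∀ i, w t i = L i + D i * U t := by
    intro t i
    have hdne : Wp * (Real.exp t)⁻¹ + Wm * Real.exp t ≠ 0 := by
      rw [← Real.exp_neg]; exact ne_of_gt (hdenpos t)
    have hXne : Wp + Real.exp t * Real.exp t * Wm ≠ 0 := ne_of_gt (hUden t)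
    rw [hw, hden, hL, hD, hU, h2t, Real.exp_neg, one_div]
    rcases ha i with h | h
    · rw [h]
      simp only [show ((1:ℝ) = -1) ↔ False by norm_num, if_false, mul_one, zero_add, Real.exp_neg]
      field_simp
      try ring
      try tauto
    · rw [h]
      simp only [if_pos rfl, ↓reduceIte]
      have : -t * (-1 : ℝ) = t := by ring
      rw [this]
      field_simp
      ring
  refine ⟨fun t _ i => key t i, fun i => ?_⟩
  have hfun : (fun t => w t i) = fun t => L i + D i * U t := funext fun t => key t i
  rw [hfun]
  have hU0 : Filter.Tendsto U Filter.atTop (nhds 0) := by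
    have hden' : Filter.Tendsto (fun t => Wp + Real.exp (2 * t) * Wm)
        Filter.atTop Filter.atTop := by
      apply Filter.tendsto_atTop_add_const_left
      apply Filter.Tendsto.atTop_mul_const hWmpos
      exact Real.tendsto_exp_atTop.comp (Filter.tendsto_id.const_mul_atTop two_pos)
    have hUeq : U = fun t => ((fun t => Wp + Real.exp (2 * t) * Wm) t)⁻¹ :=
      funext fun t => by rw [hU, one_div]
    rw [hUeq]
    exact hden'.inv_tendsto_atTop
  have : Filter.Tendsto (fun t => L i + D i * U t) Filter.atTop (nhds (L i + D i * 0)) :=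
    Filter.Tendsto.const_add _ (hU0.const_mul _)
  simpa using this
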